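/- Let f : [0,∞) → ℝ satisfy (H1), let λ, μ > 0, and suppose there exists a₀ > 0 such that f(x) ≠ 0 for all x ≥ a₀. If ∫_{a₀}^∞ 1/|f(x)| dx = ∞, then the series S = Σ_{n≥1} (1/π_n) Σ_{k≥n+1} π_k/λ_k diverges to +∞. -/

import Mathlib

open MeasureTheory Set

lemma tsum_eq_top_of_tails (h : ℕ → ENNReal) {c : ℝ} (hc : 0 < c)
    (H : ∀ m : ℕ, ENNReal.ofReal c ≤ ∑' i, h (i + m)) : ∑' i, h i = ⊤ := by
  by_contra hne
  have ht := ENNReal.tendsto_sum_nat_add h hne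
  have hev : ∀ᶠ m in Filter.atTop, (∑' i, h (i + m)) < ENNReal.ofReal c :=
    ht.eventually (gt_mem_nhds (ENNReal.ofReal_pos.mpr hc))
  obtain ⟨m, hm⟩ := hev.exists
  exact absurd (H m) (not_le.mpr hm)

theorem stmt5 (f : ℝ → ℝ) (θ : ℝ) (hθ : 0 ≤ θ)
    (hf_cont : ContinuousOn f (Ici 0)) (hf0 : f 0 = 0)
    (hH1 : ∀ x ≥ (0:ℝ), ∀ y ≥ (0:ℝ), f (x + y) - f y ≤ θ * x)
    (lam mu : ℝ) (hlam : 0 < lam) (hmu : 0 < mu)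
    (a₀ : ℝ) (ha₀ : 0 < a₀) (hfne : ∀ x ≥ a₀, f x ≠ 0)
    (lamn mun : ℕ → ℝ)
    (hlamn : ∀ n : ℕ, lamn n = lam * n + ∑ ℓ ∈ Finset.Icc 1 n, max (f ℓ - f ((ℓ : ℝ) - 1)) 0)
    (hmun : ∀ n : ℕ, mun n = mu * n + ∑ ℓ ∈ Finset.Icc 1 n, max (-(f ℓ - f ((ℓ : ℝ) - 1))) 0)
    (P : ℕ → ℝ) (hP1 : P 1 = 1)
    (hPn : ∀ n : ℕ, 2 ≤ n →
      P n = (∏ i ∈ Finset.Icc 1 n, lamn i) / (∏ i ∈ Finset.Icc 2 n, mun i))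
    (hint : (∫⁻ x in Ici a₀, ENNReal.ofReal (1 / |f x|)) = ⊤) :
    (∑' n : ℕ, ENNReal.ofReal (1 / P (n + 1)) *
      ∑' k : ℕ, ENNReal.ofReal (P (n + 2 + k) / lamn (n + 2 + k))) = ⊤ := by
  -- general increment bound
  have hincr : ∀ x y : ℝ, 0 ≤ y → y ≤ x → f x - f y ≤ θ * (x - y) := by
    intro x y hy hyx
    have := hH1 (x - y) (by linarith) y hy
    rwa [sub_add_cancel] at this
  set Fp : ℕ → ℝ := fun n => ∑ ℓ ∈ Finset.Icc 1 n, max (f ℓ - f ((ℓ : ℝ) - 1)) 0 with hFp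
  set Fm : ℕ → ℝ := fun n => ∑ ℓ ∈ Finset.Icc 1 n, max (-(f ℓ - f ((ℓ : ℝ) - 1))) 0 with hFm
  have hFp_nonneg : ∀ n, 0 ≤ Fp n := fun n =>
    Finset.sum_nonneg fun i _ => le_max_right _ _
  have hFm_nonneg : ∀ n, 0 ≤ Fm n := fun n =>
    Finset.sum_nonneg fun i _ => le_max_right _ _
  have hstep : ∀ ℓ : ℕ, 1 ≤ ℓ → f ℓ - f ((ℓ:ℝ) - 1) ≤ θ := by
    intro ℓ hℓ
    have h1 : (0:ℝ) ≤ (ℓ:ℝ) - 1 := by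
      have : (1:ℝ) ≤ (ℓ:ℝ) := by exact_mod_cast hℓ
      linarith
    have := hincr ℓ ((ℓ:ℝ) - 1) h1 (by linarith)
    simpa using this
  have hFp_le : ∀ n : ℕ, Fp n ≤ θ * n := by
    intro n
    calc Fp n ≤ ∑ ℓ ∈ Finset.Icc 1 n, θ := by
          apply Finset.sum_le_sum
          intro i hi
          have hi1 : 1 ≤ i := (Finset.mem_Icc.mp hi).1
          exact max_le (hstep i hi1) hθ
      _ = θ * n := by
          rw [Finset.sum_const, Nat.card_Icc]
          simp [mul_comm]
  have hdiff : ∀ n : ℕ, Fp n - Fm n = f n := by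
    intro n
    induction n with
    | zero => simp [hFp, hFm, hf0]
    | succ n ih =>
      have h1 : Fp (n+1) = Fp n + max (f (n+1:ℕ) - f (((n+1:ℕ):ℝ) - 1)) 0 := by
        simp only [hFp]
        rw [Finset.sum_Icc_succ_top (by omega)]
      have h2 : Fm (n+1) = Fm n + max (-(f (n+1:ℕ) - f (((n+1:ℕ):ℝ) - 1))) 0 := by
        simp only [hFm]
        rw [Finset.sum_Icc_succ_top (by omega)]
      have hmax : ∀ a : ℝ, max a 0 - max (-a) 0 = a := by
        intro a
        rcases le_total a 0 with h | h
        · rw [max_eq_right h, max_eq_left (by linarith)]; ring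
        · rw [max_eq_left h, max_eq_right (by linarith)]; ring
      have hc : (((n+1:ℕ):ℝ) - 1) = (n:ℕ) := by push_cast; ring
      rw [h1, h2, hc]
      have := hmax (f ((n+1:ℕ):ℝ) - f (n:ℕ))
      linarith
  have hFm_mono : ∀ m n : ℕ, m ≤ n → Fm m ≤ Fm n := by
    intro m n hmn
    apply Finset.sum_le_sum_of_subset_of_nonneg
    · exact Finset.Icc_subset_Icc_right hmn
    · intro i _ _; exact le_max_right _ _
  -- consequences
  have hsmall : ∀ m n : ℕ, m ≤ n → -f m ≤ θ * n + (-f n) := by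
    intro m n hmn
    have h1 : -f m ≤ Fm m := by
      have := hdiff m; have := hFp_nonneg m; linarith
    have h2 : Fm n = Fp n - f n := by have := hdiff n; linarith
    have h3 := hFm_mono m n hmn
    have h4 := hFp_le n
    linarith
  have hmun_le : ∀ n : ℕ, mun n ≤ (mu + θ) * n + (-f n) := by
    intro n
    rw [hmun]
    have h2 : Fm n = Fp n - f n := by have := hdiff n; linarith
    have := hFp_le n
    have : (∑ ℓ ∈ Finset.Icc 1 n, max (-(f ℓ - f ((ℓ : ℝ) - 1))) 0) = Fm n := rfl
    rw [this, h2]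
    have := hFp_le n
    nlinarith [hFp_le n]
  have hmun_pos : ∀ n : ℕ, 1 ≤ n → 0 < mun n := by
    intro n hn
    rw [hmun]
    have : (0:ℝ) < mu * n := by
      apply mul_pos hmu
      exact_mod_cast Nat.pos_of_ne_zero (by omega)
    have h2 := hFm_nonneg n
    simp only [hFm] at h2
    linarith
  have hlamn_pos : ∀ n : ℕ, 1 ≤ n → 0 < lamn n := by
    intro n hn
    rw [hlamn]
    have : (0:ℝ) < lam * n := by
      apply mul_pos hlam
      exact_mod_cast Nat.pos_of_ne_zero (by omega)
    have h2 : 0 ≤ ∑ ℓ ∈ Finset.Icc 1 n, max (f ℓ - f ((ℓ : ℝ) - 1)) 0 :=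
      Finset.sum_nonneg fun i _ => le_max_right _ _
    linarith
  -- positivity of P
  have hPpos : ∀ n : ℕ, 1 ≤ n → 0 < P n := by
    intro n hn
    rcases eq_or_lt_of_le hn with h | h
    · rw [← h, hP1]; norm_num
    · rw [hPn n h]
      apply div_pos
      · exact Finset.prod_pos fun i hi => hlamn_pos i (Finset.mem_Icc.mp hi).1
      · exact Finset.prod_pos fun i hi => hmun_pos i (by have := (Finset.mem_Icc.mp hi).1; omega)
  have hPratio : ∀ n : ℕ, 1 ≤ n → P (n+2) * mun (n+2) = P (n+1) * lamn (n+2) := by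
    intro n hn
    rw [hPn (n+1) (by omega), hPn (n+2) (by omega),
      show n+2 = (n+1)+1 from rfl,
      Finset.prod_Icc_succ_top (show 1 ≤ (n+1)+1 by omega),
      Finset.prod_Icc_succ_top (show 2 ≤ (n+1)+1 by omega)]
    have hμ : (∏ i ∈ Finset.Icc 2 (n+1), mun i) ≠ 0 := by
      apply ne_of_gt
      exact Finset.prod_pos fun i hi => hmun_pos i (by have := (Finset.mem_Icc.mp hi).1; omega)
    have hμ2 : mun ((n+1)+1) ≠ 0 := ne_of_gt (hmun_pos _ (by omega))
    field_simp
  have hterm : ∀ n : ℕ,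
      ENNReal.ofReal (1 / mun (n + 3)) ≤ ENNReal.ofReal (1 / P (n + 1 + 1)) *
        ∑' k : ℕ, ENNReal.ofReal (P (n + 1 + 2 + k) / lamn (n + 1 + 2 + k)) := by
    intro n
    have e1 : (1 : ℝ) / mun (n + 3) = (1 / P (n + 2)) * (P (n + 3) / lamn (n + 3)) := by
      have e := hPratio (n + 1) (by omega)
      have p1 := hPpos (n + 2) (by omega)
      have p2 := hPpos (n + 3) (by omega)
      have p3 := hlamn_pos (n + 3) (by omega)
      have p4 := hmun_pos (n + 3) (by omega)
      rw [show n+1+2 = n+3 from rfl, show n+1+1 = n+2 from rfl] at e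
      field_simp
      linarith [e]
    have h0 : ENNReal.ofReal (P (n + 3) / lamn (n + 3)) ≤
        ∑' k : ℕ, ENNReal.ofReal (P (n + 1 + 2 + k) / lamn (n + 1 + 2 + k)) := by
      have := ENNReal.le_tsum (f := fun k : ℕ => ENNReal.ofReal (P (n + 1 + 2 + k) / lamn (n + 1 + 2 + k))) 0
      simpa using this
    calc ENNReal.ofReal (1 / mun (n + 3))
        = ENNReal.ofReal (1 / P (n + 2)) * ENNReal.ofReal (P (n + 3) / lamn (n + 3)) := by
          rw [e1, ENNReal.ofReal_mul (one_div_nonneg.mpr (hPpos (n+2) (by omega)).le)]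
      _ ≤ _ := by
          rw [show n+1+1 = n+2 from rfl]
          exact mul_le_mul_right h0 _
  have htop : (∑' n : ℕ, ENNReal.ofReal (1 / mun (n + 3))) = ⊤ := by
    by_contra hne
    set C : ℝ := mu + 2*θ + 1 with hC
    have hCpos : 0 < C := by rw [hC]; linarith
    set E : Set ℕ := {N | 0 < N ∧ -f N ≤ N} with hEdef
    by_cases hEinf : E.Infinite
    · apply hne
      apply tsum_eq_top_of_tails _ (show (0:ℝ) < 1/(2*C) by positivity)
      intro m
      obtain ⟨N, hNE, hNgt⟩ := hEinf.exists_gt (2*m + 12)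
      have hNpos : (0:ℝ) < N := by
        have : 0 < N := by omega
        exact_mod_cast this
      have key : ∀ i : ℕ, i + m + 3 ≤ N →
          ENNReal.ofReal (1/(C*N)) ≤ ENNReal.ofReal (1 / mun (i + m + 3)) := by
        intro i hi
        apply ENNReal.ofReal_le_ofReal
        apply one_div_le_one_div_of_le (hmun_pos _ (by omega))
        have h1 := hmun_le (i+m+3)
        have h2 := hsmall (i+m+3) N hi
        have h3 : -f N ≤ (N:ℝ) := hNE.2
        have h4 : ((i+m+3:ℕ):ℝ) ≤ (N:ℝ) := by exact_mod_cast hi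
        have h5 : (mu+θ) * ((i+m+3:ℕ):ℝ) ≤ (mu+θ) * N :=
          mul_le_mul_of_nonneg_left h4 (by linarith)
        push_cast at h1 h2 h3 h4 h5 ⊢
        rw [hC]
        linarith
      calc ENNReal.ofReal (1/(2*C))
          ≤ ENNReal.ofReal (((N - m - 2 : ℕ):ℝ) * (1/(C*N))) := by
            apply ENNReal.ofReal_le_ofReal
            have hN2 : (N:ℝ)/2 ≤ ((N - m - 2 : ℕ):ℝ) := by
              have hc : ((N - m - 2 : ℕ):ℝ) = (N:ℝ) - (m:ℝ) - 2 := by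
                have : (N - m - 2 : ℕ) = N - (m + 2) := by omega
                rw [this, Nat.cast_sub (by omega)]
                push_cast; ring
              have hm : (m:ℝ) ≤ ((2*m+12:ℕ):ℝ) := by push_cast; linarith
              have hN : ((2*m+12:ℕ):ℝ) < (N:ℝ) := by exact_mod_cast hNgt
              push_cast at hm hN
              rw [hc]; linarith
            have he : 1/(2*C) = ((N:ℝ)/2) * (1/(C*N)) := by field_simp
            rw [he]
            exact mul_le_mul_of_nonneg_right hN2 (by positivity)
        _ = (N - m - 2 : ℕ) • ENNReal.ofReal (1/(C*N)) := by
            rw [nsmul_eq_mul, ← ENNReal.ofReal_natCast (N - m - 2),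
              ← ENNReal.ofReal_mul (Nat.cast_nonneg _)]
        _ ≤ ∑ i ∈ Finset.range (N - m - 2), ENNReal.ofReal (1 / mun (i + m + 3)) := by
            apply Finset.card_nsmul_le_sum (Finset.range (N - m - 2))
              _ _ (fun i hi => ?_) |>.trans_eq' (by rw [Finset.card_range])
            exact key i (by have := Finset.mem_range.mp hi; omega)
        _ ≤ ∑' i : ℕ, ENNReal.ofReal (1 / mun ((i + m) + 3)) := by
            exact ENNReal.sum_le_tsum (Finset.range (N - m - 2))
    · have hEfin : E.Finite := Set.not_infinite.mp hEinf
      obtain ⟨n₁, hn₁⟩ := hEfin.bddAbove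
      set B : ℕ := max (n₁+1) (⌈a₀⌉₊ + 2*⌈θ⌉₊ + 3) with hBdef
      have hB3 : 3 ≤ B := le_trans (by omega) (le_max_right (n₁+1) (⌈a₀⌉₊ + 2*⌈θ⌉₊ + 3))
      have hgB : ∀ n : ℕ, B ≤ n → (n:ℝ) < -f n := by
        intro n hn
        by_contra hcon
        push_neg at hcon
        have hnE : n ∈ E := ⟨by omega, hcon⟩
        have h1 := hn₁ hnE
        have h2 : n₁ + 1 ≤ B := le_max_left _ _
        omega
      have ha₀B : a₀ ≤ (B:ℝ) := by
        have h1 : a₀ ≤ (⌈a₀⌉₊:ℝ) := Nat.le_ceil a₀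
        have h2 : (⌈a₀⌉₊:ℝ) ≤ (B:ℝ) := by
          have : ⌈a₀⌉₊ ≤ B := le_trans (by omega) (le_max_right (n₁+1) _)
          exact_mod_cast this
        linarith
      have hθB : 2*θ ≤ (B:ℝ) := by
        have h1 : θ ≤ (⌈θ⌉₊:ℝ) := Nat.le_ceil θ
        have h2 : ((2*⌈θ⌉₊:ℕ):ℝ) ≤ (B:ℝ) := by
          have : 2*⌈θ⌉₊ ≤ B := le_trans (by omega) (le_max_right (n₁+1) _)
          exact_mod_cast this
        push_cast at h2
        linarith
      have hneg : ∀ x : ℝ, (B:ℝ) ≤ x → f x < 0 := by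
        intro x hx
        have hxa : a₀ ≤ x := le_trans ha₀B hx
        by_contra hcon
        push_neg at hcon
        have hfx : 0 < f x := lt_of_le_of_ne hcon (Ne.symm (hfne x hxa))
        have hfB : f (B:ℝ) < 0 := by
          have h1 := hgB B le_rfl
          have h2 : (0:ℝ) ≤ (B:ℝ) := Nat.cast_nonneg B
          linarith
        have hcont : ContinuousOn f (Icc (B:ℝ) x) :=
          hf_cont.mono (fun y hy => le_trans (Nat.cast_nonneg B) hy.1)
        obtain ⟨c, hc, hfc⟩ := intermediate_value_Icc hx hcont ⟨hfB.le, hfx.le⟩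
        exact hfne c (le_trans ha₀B hc.1) hfc
      have hIco : ∀ n : ℕ, B ≤ n → ∀ x ∈ Ico (n:ℝ) ((n:ℝ)+1),
          1/|f x| ≤ 2 * (mu+θ+1) * (1 / mun n) := by
        intro n hn x hx
        have hnx : (n:ℝ) ≤ x := hx.1
        have hx1 : x < (n:ℝ)+1 := hx.2
        have hBn : (B:ℝ) ≤ (n:ℝ) := by exact_mod_cast hn
        have hfx : f x < 0 := hneg x (le_trans hBn hnx)
        have hgn : (n:ℝ) < -f n := hgB n hn
        have hθn : 2*θ ≤ (n:ℝ) := le_trans hθB hBn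
        have hn0 : (0:ℝ) ≤ (n:ℝ) := Nat.cast_nonneg n
        have he1 : f x - f n ≤ θ*(x - n) := hincr x (n:ℝ) hn0 hnx
        have hθx : θ*(x-(n:ℝ)) ≤ θ := by nlinarith
        have hgx : (-f n)/2 ≤ -f x := by linarith
        have hgx0 : 0 < -f x := by linarith
        have habs : |f x| = -f x := abs_of_neg hfx
        rw [habs]
        have hmn : mun n ≤ (mu+θ+1) * (-f n) := by
          have h1 := hmun_le n
          have h2 : (mu+θ) * (n:ℝ) ≤ (mu+θ) * (-f n) :=
            mul_le_mul_of_nonneg_left hgn.le (by linarith)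
          nlinarith
        have hmunpos := hmun_pos n (by omega)
        calc 1/(-f x) ≤ 1/((-f n)/2) := one_div_le_one_div_of_le (by linarith) hgx
          _ = 2/(-f n) := one_div_div _ _
          _ ≤ 2*(mu+θ+1)*(1/mun n) := by
              rw [mul_one_div]
              rw [div_le_div_iff₀ (by linarith) hmunpos]
              nlinarith
      have hIcoInt : ∀ n : ℕ, B ≤ n →
          (∫⁻ x in Ico (n:ℝ) ((n:ℝ)+1), ENNReal.ofReal (1/|f x|)) ≤
            ENNReal.ofReal (2*(mu+θ+1)) * ENNReal.ofReal (1/mun n) := by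
        intro n hn
        calc (∫⁻ x in Ico (n:ℝ) ((n:ℝ)+1), ENNReal.ofReal (1/|f x|))
            ≤ ∫⁻ _ in Ico (n:ℝ) ((n:ℝ)+1), ENNReal.ofReal (2*(mu+θ+1)*(1/mun n)) :=
              setLIntegral_mono measurable_const
                (fun x hx => ENNReal.ofReal_le_ofReal (hIco n hn x hx))
          _ = ENNReal.ofReal (2*(mu+θ+1)*(1/mun n)) * volume (Ico (n:ℝ) ((n:ℝ)+1)) :=
              setLIntegral_const _ _
          _ = ENNReal.ofReal (2*(mu+θ+1)) * ENNReal.ofReal (1/mun n) := by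
              rw [Real.volume_Ico, show (n:ℝ)+1-(n:ℝ) = 1 by ring, ENNReal.ofReal_one, mul_one,
                ENNReal.ofReal_mul (by linarith)]
      have hIcc : (∫⁻ x in Icc a₀ (B:ℝ), ENNReal.ofReal (1/|f x|)) < ⊤ := by
        have hsub : Icc a₀ (B:ℝ) ⊆ Ici (0:ℝ) := fun y hy => le_trans ha₀.le hy.1
        have hcontabs : ContinuousOn (fun x => |f x|) (Icc a₀ (B:ℝ)) := (hf_cont.mono hsub).abs
        obtain ⟨x₀, hx₀, hminOn⟩ := isCompact_Icc.exists_isMinOn ⟨a₀, le_refl a₀, ha₀B⟩ hcontabs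
        have hε : 0 < |f x₀| := abs_pos.mpr (hfne x₀ hx₀.1)
        calc (∫⁻ x in Icc a₀ (B:ℝ), ENNReal.ofReal (1/|f x|))
            ≤ ∫⁻ _ in Icc a₀ (B:ℝ), ENNReal.ofReal (1/|f x₀|) :=
              setLIntegral_mono measurable_const (fun x hx =>
                ENNReal.ofReal_le_ofReal (one_div_le_one_div_of_le hε (hminOn hx)))
          _ = ENNReal.ofReal (1/|f x₀|) * volume (Icc a₀ (B:ℝ)) := setLIntegral_const _ _
          _ < ⊤ := by
              rw [Real.volume_Icc]
              exact ENNReal.mul_lt_top ENNReal.ofReal_lt_top ENNReal.ofReal_lt_top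
      have hcover : Ici a₀ ⊆ Icc a₀ (B:ℝ) ∪ ⋃ j : ℕ, Ico (((B+j:ℕ)):ℝ) ((((B+j:ℕ)):ℝ)+1) := by
        intro x hx
        by_cases hxB : x ≤ (B:ℝ)
        · exact Or.inl ⟨hx, hxB⟩
        · push_neg at hxB
          refine Or.inr (mem_iUnion.mpr ⟨⌊x⌋₊ - B, ?_⟩)
          have h1 : B ≤ ⌊x⌋₊ := Nat.le_floor hxB.le
          have h2 : (B + (⌊x⌋₊ - B) : ℕ) = ⌊x⌋₊ := by omega
          rw [h2]
          exact ⟨Nat.floor_le (by linarith), Nat.lt_floor_add_one x⟩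
      have hreindex : (∑' j : ℕ, ENNReal.ofReal (1/mun (B+j))) ≤
          ∑' n : ℕ, ENNReal.ofReal (1 / mun (n + 3)) := by
        have hkey := ENNReal.tsum_comp_le_tsum_of_injective
          (f := fun j : ℕ => j + (B-3)) (add_left_injective (B-3))
          (fun n => ENNReal.ofReal (1 / mun (n+3)))
        have he : ∀ j : ℕ, (j+(B-3))+3 = B + j := by omega
        calc (∑' j : ℕ, ENNReal.ofReal (1/mun (B+j)))
            = ∑' j : ℕ, ENNReal.ofReal (1/mun ((j+(B-3))+3)) :=
              tsum_congr (fun j => by rw [he j])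
          _ ≤ _ := hkey
      have hfin : (∫⁻ x in Ici a₀, ENNReal.ofReal (1 / |f x|)) < ⊤ := by
        calc (∫⁻ x in Ici a₀, ENNReal.ofReal (1 / |f x|))
            ≤ ∫⁻ x in (Icc a₀ (B:ℝ) ∪ ⋃ j : ℕ, Ico (((B+j:ℕ)):ℝ) ((((B+j:ℕ)):ℝ)+1)),
                ENNReal.ofReal (1 / |f x|) := lintegral_mono_set hcover
          _ ≤ (∫⁻ x in Icc a₀ (B:ℝ), ENNReal.ofReal (1 / |f x|)) +
              ∫⁻ x in (⋃ j : ℕ, Ico (((B+j:ℕ)):ℝ) ((((B+j:ℕ)):ℝ)+1)),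
                ENNReal.ofReal (1 / |f x|) := lintegral_union_le _ _ _
          _ ≤ (∫⁻ x in Icc a₀ (B:ℝ), ENNReal.ofReal (1 / |f x|)) +
              ∑' j : ℕ, ∫⁻ x in Ico (((B+j:ℕ)):ℝ) ((((B+j:ℕ)):ℝ)+1),
                ENNReal.ofReal (1 / |f x|) :=
              add_le_add_right (lintegral_iUnion_le _ _) _
          _ ≤ (∫⁻ x in Icc a₀ (B:ℝ), ENNReal.ofReal (1 / |f x|)) +
              ∑' j : ℕ, ENNReal.ofReal (2*(mu+θ+1)) * ENNReal.ofReal (1/mun (B+j)) :=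
              add_le_add_right (ENNReal.tsum_le_tsum
                (fun j => hIcoInt (B+j) (Nat.le_add_right B j))) _
          _ = (∫⁻ x in Icc a₀ (B:ℝ), ENNReal.ofReal (1 / |f x|)) +
              ENNReal.ofReal (2*(mu+θ+1)) * ∑' j : ℕ, ENNReal.ofReal (1/mun (B+j)) := by
              rw [ENNReal.tsum_mul_left]
          _ < ⊤ := by
              apply ENNReal.add_lt_top.mpr
              refine ⟨hIcc, ENNReal.mul_lt_top ENNReal.ofReal_lt_top ?_⟩
              exact lt_of_le_of_lt hreindex (lt_top_iff_ne_top.mpr hne)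
      exact absurd hint hfin.ne
  refine top_le_iff.mp ?_
  calc (⊤ : ENNReal) = ∑' n : ℕ, ENNReal.ofReal (1 / mun (n + 3)) := htop.symm
    _ ≤ ∑' n : ℕ, (ENNReal.ofReal (1 / P (n + 1 + 1)) *
        ∑' k : ℕ, ENNReal.ofReal (P (n + 1 + 2 + k) / lamn (n + 1 + 2 + k))) :=
      ENNReal.tsum_le_tsum hterm
    _ ≤ _ := ENNReal.tsum_comp_le_tsum_of_injective (add_left_injective 1)
        (fun n => ENNReal.ofReal (1 / P (n + 1)) *
          ∑' k : ℕ, ENNReal.ofReal (P (n + 2 + k) / lamn (n + 2 + k)))
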